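/- Let A be a commutative ring with unity, let U be an A-weighted tile, let {T_λ : λ ∈ Λ} be a collection of A-weighted tiles, and let Ĩ be the ideal of A[X^ℝ,Y^ℝ] generated by {f_{T_λ} : λ ∈ Λ}. Then {T_λ : λ ∈ Λ} A-tiles U if and only if f_U ∈ Ĩ. -/

import Mathlib

open Finset

/-- The element `(X^{b2} - X^{b1})(Y^{c2} - Y^{c1})` of the group algebra
`A[X^ℝ, Y^ℝ] = AddMonoidAlgebra A (ℝ × ℝ)`. -/
noncomputable def fRect (A : Type*) [CommRing A] (b1 b2 c1 c2 : ℝ) :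
    AddMonoidAlgebra A (ℝ × ℝ) :=
  (AddMonoidAlgebra.single (b2, 0) 1 - AddMonoidAlgebra.single (b1, 0) 1) *
    (AddMonoidAlgebra.single (0, c2) 1 - AddMonoidAlgebra.single (0, c1) 1)

/-- `f` is the polynomial `f_T` of the `A`-weighted tile `T`. -/
noncomputable def IsTilePoly (A : Type*) [CommRing A] (T : ℝ × ℝ → A)
    (f : AddMonoidAlgebra A (ℝ × ℝ)) : Prop :=
  ∃ (n : ℕ) (a : Fin n → A) (b1 b2 c1 c2 : Fin n → ℝ),
    (∀ i, b1 i < b2 i) ∧ (∀ i, c1 i < c2 i) ∧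
    (∀ p, T p = ∑ i, a i *
      (if b1 i ≤ p.1 ∧ p.1 < b2 i ∧ c1 i ≤ p.2 ∧ p.2 < c2 i then 1 else 0)) ∧
    f = ∑ i, a i • fRect A (b1 i) (b2 i) (c1 i) (c2 i)

/-- The collection `{T_λ}` `A`-tiles `U` if and only if `f_U` lies in the ideal
of `A[X^ℝ, Y^ℝ]` generated by the `f_{T_λ}`. -/
noncomputable def Phi (A : Type*) [CommRing A] (x y : ℝ) :
    AddMonoidAlgebra A (ℝ × ℝ) →ₗ[A] A :=
  (Finsupp.linearCombination A (fun q : ℝ × ℝ => if q.1 ≤ x ∧ q.2 ≤ y then (1:A) else 0)).comp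
    (AddMonoidAlgebra.coeffLinearEquiv A).toLinearMap

theorem Phi_single (A : Type*) [CommRing A] (x y b c : ℝ) (a : A) :
    Phi A x y (AddMonoidAlgebra.single (b,c) a) = if b ≤ x ∧ c ≤ y then a else 0 := by
  rw [Phi, LinearMap.comp_apply, LinearEquiv.coe_coe, AddMonoidAlgebra.coeffLinearEquiv_apply,
    AddMonoidAlgebra.coeff_single, Finsupp.linearCombination_single]
  split_ifs <;> simp

theorem chi_mul {A : Type*} [CommRing A] (P Q : Prop) [Decidable P] [Decidable Q] :
    (if P then (1:A) else 0) * (if Q then 1 else 0) = if P ∧ Q then 1 else 0 := by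
  split_ifs <;> simp_all

theorem chi_sub {A : Type*} [CommRing A] {b1 b2 : ℝ} (t : ℝ) (h : b1 ≤ b2) :
    (if b1 ≤ t then (1:A) else 0) - (if b2 ≤ t then 1 else 0)
      = if b1 ≤ t ∧ t < b2 then 1 else 0 := by
  rcases le_or_gt b1 t with h1 | h1 <;> rcases le_or_gt b2 t with h2 | h2
  · simp [h1, h2, h2.not_gt]
  · simp [h1, h2]
  · exact absurd (h.trans h2) h1.not_ge
  · simp [h1.not_ge, h2]

theorem fRect_eq (A : Type*) [CommRing A] (b1 b2 c1 c2 : ℝ) :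
    fRect A b1 b2 c1 c2 =
      AddMonoidAlgebra.single (b2, c2) 1 - AddMonoidAlgebra.single (b2, c1) 1
        - AddMonoidAlgebra.single (b1, c2) 1 + AddMonoidAlgebra.single (b1, c1) 1 := by
  rw [fRect, sub_mul, mul_sub, mul_sub, AddMonoidAlgebra.single_mul_single,
    AddMonoidAlgebra.single_mul_single, AddMonoidAlgebra.single_mul_single,
    AddMonoidAlgebra.single_mul_single]
  simp only [Prod.mk_add_mk, add_zero, zero_add, mul_one]
  ring

theorem Phi_fRect (A : Type*) [CommRing A] (x y b1 b2 c1 c2 : ℝ)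
    (hb : b1 < b2) (hc : c1 < c2) :
    Phi A x y (fRect A b1 b2 c1 c2) =
      if b1 ≤ x ∧ x < b2 ∧ c1 ≤ y ∧ y < c2 then 1 else 0 := by
  have key : Phi A x y (fRect A b1 b2 c1 c2) =
      ((if b1 ≤ x then (1:A) else 0) - (if b2 ≤ x then 1 else 0)) *
        ((if c1 ≤ y then (1:A) else 0) - (if c2 ≤ y then 1 else 0)) := by
    rw [fRect_eq, map_add, map_sub, map_sub, Phi_single, Phi_single, Phi_single, Phi_single]
    simp only [ite_and]
    split_ifs <;> ring
  rw [key, chi_sub x hb.le, chi_sub y hc.le, chi_mul]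
  simp only [and_assoc]

theorem IsTilePoly.eval {A : Type*} [CommRing A] {T : ℝ × ℝ → A}
    {f : AddMonoidAlgebra A (ℝ × ℝ)} (h : IsTilePoly A T f) (x y : ℝ) :
    T (x, y) = Phi A x y f := by
  obtain ⟨n, a, b1, b2, c1, c2, hb, hc, hT, hf⟩ := h
  rw [hf, map_sum, hT (x, y)]
  refine Finset.sum_congr rfl fun i _ => ?_
  rw [map_smul, Phi_fRect A x y _ _ _ _ (hb i) (hc i), smul_eq_mul]

theorem Phi_shift {A : Type*} [CommRing A] (x y σ τ : ℝ)
    (g : AddMonoidAlgebra A (ℝ × ℝ)) :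
    Phi A x y (AddMonoidAlgebra.single (σ, τ) 1 * g) = Phi A (x - σ) (y - τ) g := by
  induction g using AddMonoidAlgebra.induction_linear with
  | zero => simp
  | add f g hf hg =>
      rw [mul_add, map_add, map_add, hf, hg]
  | single q a =>
      obtain ⟨b, c⟩ := q
      erw [AddMonoidAlgebra.single_mul_single]
      rw [one_mul, Prod.mk_add_mk, Phi_single, Phi_single]
      refine if_congr (and_congr ?_ ?_) rfl rfl
      · rw [le_sub_iff_add_le, add_comm]
      · rw [le_sub_iff_add_le, add_comm]

theorem chi_diff {A : Type*} [CommRing A] {u x ε : ℝ} (hε : 0 < ε) (h : u < x → u ≤ x - ε) :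
    (if u ≤ x then (1:A) else 0) - (if u ≤ x - ε then 1 else 0) = if u = x then 1 else 0 := by
  rcases lt_trichotomy u x with h1 | h1 | h1
  · simp [h1.le, h h1, h1.ne]
  · subst h1; simp [(by linarith : ¬ u ≤ u - ε)]
  · have h2 : ¬ u ≤ x - ε := by linarith
    simp [h1.not_ge, h2, h1.ne']

theorem Phi_eq_zero {A : Type*} [CommRing A] {f : AddMonoidAlgebra A (ℝ × ℝ)}
    (h : ∀ x y, Phi A x y f = 0) : f = 0 := by
  classical
  ext q
  obtain ⟨x, y⟩ := q
  show f.coeff (x, y) = 0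
  set S := f.coeff.support with hS
  set εset : Finset ℝ := insert 1 ((S.filter fun q => q.1 < x).image (fun q => x - q.1) ∪
      (S.filter fun q => q.2 < y).image (fun q => y - q.2)) with hεset
  have hne : εset.Nonempty := ⟨1, Finset.mem_insert_self _ _⟩
  set ε := εset.min' hne with hε_def
  have hεpos : 0 < ε := by
    have hmem := εset.min'_mem hne
    rw [← hε_def] at hmem
    rcases Finset.mem_insert.1 hmem with h1 | h1
    · rw [h1]; norm_num
    · rcases Finset.mem_union.1 h1 with h2 | h2 <;>
      · obtain ⟨q, hq, he⟩ := Finset.mem_image.1 h2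
        have := (Finset.mem_filter.1 hq).2
        rw [← he]
        linarith
  have hx : ∀ q : ℝ × ℝ, q ∈ S → q.1 < x → q.1 ≤ x - ε := by
    intro q hq hlt
    have hmem : x - q.1 ∈ εset := Finset.mem_insert_of_mem (Finset.mem_union_left _
      (Finset.mem_image_of_mem _ (Finset.mem_filter.2 ⟨hq, hlt⟩)))
    have := εset.min'_le _ hmem
    linarith
  have hy : ∀ q : ℝ × ℝ, q ∈ S → q.2 < y → q.2 ≤ y - ε := by
    intro q hq hlt
    have hmem : y - q.2 ∈ εset := Finset.mem_insert_of_mem (Finset.mem_union_right _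
      (Finset.mem_image_of_mem _ (Finset.mem_filter.2 ⟨hq, hlt⟩)))
    have := εset.min'_le _ hmem
    linarith
  have hsum : ∀ x' y' : ℝ, Phi A x' y' f
      = ∑ q ∈ S, f.coeff q * (if q.1 ≤ x' ∧ q.2 ≤ y' then 1 else 0) := by
    intro x' y'
    rw [Phi, LinearMap.comp_apply]
    erw [Finsupp.linearCombination_apply]
    rw [Finsupp.sum]
    exact Finset.sum_congr rfl fun q _ => rfl
  have h4 : Phi A x y f - Phi A (x-ε) y f - Phi A x (y-ε) f + Phi A (x-ε) (y-ε) f = 0 := by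
    rw [h, h, h, h]; ring
  rw [hsum, hsum, hsum, hsum, ← Finset.sum_sub_distrib, ← Finset.sum_sub_distrib,
    ← Finset.sum_add_distrib] at h4
  have key : ∀ q ∈ S, ((((f.coeff q * if q.1 ≤ x ∧ q.2 ≤ y then 1 else 0)
        - f.coeff q * if q.1 ≤ x - ε ∧ q.2 ≤ y then 1 else 0)
        - f.coeff q * if q.1 ≤ x ∧ q.2 ≤ y - ε then 1 else 0)
        + f.coeff q * if q.1 ≤ x - ε ∧ q.2 ≤ y - ε then 1 else 0)
      = if (x, y) = q then f.coeff q else 0 := by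
    intro q hq
    rw [← chi_mul, ← chi_mul, ← chi_mul, ← chi_mul]
    have e1 : f.coeff q * ((if q.1 ≤ x then (1:A) else 0) * (if q.2 ≤ y then 1 else 0))
        - f.coeff q * ((if q.1 ≤ x - ε then (1:A) else 0) * (if q.2 ≤ y then 1 else 0))
        - f.coeff q * ((if q.1 ≤ x then (1:A) else 0) * (if q.2 ≤ y - ε then 1 else 0))
        + f.coeff q * ((if q.1 ≤ x - ε then (1:A) else 0) * (if q.2 ≤ y - ε then 1 else 0))
        = f.coeff q * (((if q.1 ≤ x then (1:A) else 0) - (if q.1 ≤ x - ε then 1 else 0)) *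
            ((if q.2 ≤ y then (1:A) else 0) - (if q.2 ≤ y - ε then 1 else 0))) := by ring
    rw [e1, chi_diff hεpos (hx q hq), chi_diff hεpos (hy q hq), chi_mul]
    have hiff : (q.1 = x ∧ q.2 = y) ↔ ((x, y) = q) := by
      constructor
      · rintro ⟨h1, h2⟩; exact Prod.ext h1.symm h2.symm
      · rintro rfl; exact ⟨rfl, rfl⟩
    rw [if_congr hiff rfl rfl, mul_ite, mul_one, mul_zero]
  rw [Finset.sum_congr rfl key] at h4
  rw [Finset.sum_ite_eq] at h4
  by_cases hmem : (x, y) ∈ S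
  · rwa [if_pos hmem] at h4
  · exact Finsupp.notMem_support_iff.1 hmem

theorem Phi_shift' {A : Type*} [CommRing A] (x y : ℝ) (w : ℝ × ℝ)
    (g : AddMonoidAlgebra A (ℝ × ℝ)) :
    Phi A x y (AddMonoidAlgebra.single w 1 * g) = Phi A (x - w.1) (y - w.2) g := by
  obtain ⟨σ, τ⟩ := w
  exact Phi_shift x y σ τ g

theorem tiles_iff_mem_ideal (A : Type*) [CommRing A] {Λ : Type*}
    (T : Λ → ℝ × ℝ → A) (F : Λ → AddMonoidAlgebra A (ℝ × ℝ))
    (hF : ∀ l, IsTilePoly A (T l) (F l))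
    (U : ℝ × ℝ → A) (fU : AddMonoidAlgebra A (ℝ × ℝ)) (hU : IsTilePoly A U fU) :
    (∃ (n : ℕ) (a : Fin n → A) (lam : Fin n → Λ) (v : Fin n → ℝ × ℝ),
        ∀ p : ℝ × ℝ, U p = ∑ i, a i * T (lam i) (p.1 - (v i).1, p.2 - (v i).2))
      ↔ fU ∈ Ideal.span (Set.range F) := by
  classical
  constructor
  · rintro ⟨n, a, lam, v, hUT⟩
    have hg : fU = ∑ i : Fin n,
        (a i • AddMonoidAlgebra.single (v i) (1 : A)) * F (lam i) := by
      have hz : ∀ x y : ℝ, Phi A x y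
          (fU - ∑ i : Fin n, (a i • AddMonoidAlgebra.single (v i) (1 : A)) * F (lam i)) = 0 := by
        intro x y
        rw [map_sub, map_sum, ← hU.eval x y]
        have hterm : ∀ i : Fin n,
            Phi A x y ((a i • AddMonoidAlgebra.single (v i) (1 : A)) * F (lam i))
              = a i * T (lam i) (x - (v i).1, y - (v i).2) := by
          intro i
          rw [smul_mul_assoc, map_smul, Phi_shift', smul_eq_mul,
            ← (hF (lam i)).eval (x - (v i).1) (y - (v i).2)]
        rw [Finset.sum_congr rfl fun i _ => hterm i, hUT (x, y)]
        exact sub_self _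
      exact sub_eq_zero.1 (Phi_eq_zero (fun x y => hz x y))
    rw [hg]
    exact Ideal.sum_mem _ fun i _ =>
      Ideal.mul_mem_left _ _ (Ideal.subset_span ⟨lam i, rfl⟩)
  · intro hmem
    rw [Finsupp.mem_ideal_span_range_iff_exists_finsupp] at hmem
    obtain ⟨c, hc⟩ := hmem
    have main : ∀ p : ℝ × ℝ, U p
        = ∑ l ∈ c.support, ∑ w ∈ (c l).coeff.support,
            (c l).coeff w * T l (p.1 - w.1, p.2 - w.2) := by
      intro p
      have h1 : U p = Phi A p.1 p.2 fU := hU.eval p.1 p.2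
      rw [h1, ← hc, Finsupp.sum, map_sum]
      refine Finset.sum_congr rfl fun l _ => ?_
      have h2 : c l * F l
          = ∑ w ∈ (c l).coeff.support, ((c l).coeff w) • (AddMonoidAlgebra.single w (1 : A) * F l) := by
        conv_lhs => rw [← AddMonoidAlgebra.sum_coeff_single (c l)]
        rw [Finsupp.sum, Finset.sum_mul]
        refine Finset.sum_congr rfl fun w _ => ?_
        rw [← smul_mul_assoc]
        congr 1
        rw [AddMonoidAlgebra.smul_single', mul_one]
      rw [h2, map_sum]
      refine Finset.sum_congr rfl fun w _ => ?_
      rw [map_smul, Phi_shift', smul_eq_mul, ← (hF l).eval (p.1 - w.1) (p.2 - w.2)]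
    set E : Finset ((_ : Λ) × (ℝ × ℝ)) := c.support.sigma fun l => (c l).coeff.support with hE
    set e : Fin (Fintype.card ↥E) ≃ ↥E := (Fintype.equivFin ↥E).symm with he
    refine ⟨Fintype.card ↥E, fun i => (c (e i).val.1).coeff (e i).val.2, fun i => (e i).val.1,
      fun i => (e i).val.2, fun p => ?_⟩
    rw [main p]
    rw [← Finset.sum_sigma c.support (fun l => (c l).coeff.support)
      (fun σ => (c σ.1).coeff σ.2 * T σ.1 (p.1 - σ.2.1, p.2 - σ.2.2))]
    rw [← Finset.sum_coe_sort E (fun σ => (c σ.1).coeff σ.2 * T σ.1 (p.1 - σ.2.1, p.2 - σ.2.2))]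
    exact (Equiv.sum_comp e (fun t : ↥E =>
      (c t.val.1).coeff t.val.2 * T t.val.1 (p.1 - t.val.2.1, p.2 - t.val.2.2))).symm
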